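/- Let σ < π be permutations and let S ⊆ Ê^{σ,π} with |S| > 1. Then the Möbius function of the finite poset ⋂_{η∈S} P(η)° equals −1 if S ∈ EZ^{σ,π}, and equals 0 otherwise. -/

import Mathlib

open scoped Classical

set_option maxHeartbeats 1000000

/-! ## The permutation pattern poset -/

/-- The type of all (finite) permutations: a permutation of length `n` is an element of
`Equiv.Perm (Fin n)`; the letter in position `i` is `p.2 i` (letters compared via the
order on `Fin n`). -/
abbrev PermPat : Type := Σ n : ℕ, Equiv.Perm (Fin n)

/-- Pattern containment: `PatLe σ π` iff `π` has a subsequence in the same relative order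
as `σ`, i.e. there is an occurrence of `σ` in `π`. -/
def PatLe (p q : PermPat) : Prop :=
  ∃ f : Fin p.1 ↪o Fin q.1, ∀ i j : Fin p.1, p.2 i < p.2 j ↔ q.2 (f i) < q.2 (f j)

lemma patLe_refl (p : PermPat) : PatLe p p := by
  refine ⟨(OrderIso.refl (Fin p.1)).toOrderEmbedding, fun i j => ?_⟩
  simp

lemma patLe_trans {p q r : PermPat} (h1 : PatLe p q) (h2 : PatLe q r) : PatLe p r := by
  obtain ⟨f, hf⟩ := h1
  obtain ⟨g, hg⟩ := h2
  exact ⟨f.trans g, fun i j => (hf i j).trans (hg (f i) (f j))⟩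

lemma PatLe.len_le {p q : PermPat} (h : PatLe p q) : p.1 ≤ q.1 := by
  obtain ⟨f, -⟩ := h
  simpa using Fintype.card_le_of_embedding f.toEmbedding

lemma StrictMono.fin_apply_eq {n : ℕ} {f : Fin n → Fin n} (hf : StrictMono f) (i : Fin n) :
    f i = i := by
  have hle : ∀ m : ℕ, ∀ j : Fin n, j.val = m → j.val ≤ (f j).val := by
    intro m
    induction m with
    | zero => intro j hj; omega
    | succ m ih =>
      intro j hj
      have hm : m < n := by omega
      have h1 : f ⟨m, hm⟩ < f j := hf (by simp [Fin.lt_def]; omega)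
      have h2 := ih ⟨m, hm⟩ rfl
      simp only [Fin.lt_def] at h1
      simp only [Fin.val_mk] at h1 h2
      omega
  have hge : ∀ m : ℕ, ∀ j : Fin n, j.val + m + 1 = n → (f j).val ≤ j.val := by
    intro m
    induction m with
    | zero => intro j hj; have := (f j).isLt; omega
    | succ m ih =>
      intro j hj
      have hs : j.val + 1 < n := by omega
      have h1 : f j < f ⟨j.val + 1, hs⟩ := hf (by simp [Fin.lt_def])
      have h2 := ih ⟨j.val + 1, hs⟩ (by simp only [Fin.val_mk]; omega)
      simp only [Fin.lt_def] at h1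
      simp only [Fin.val_mk] at h1 h2
      omega
  exact Fin.ext (le_antisymm (hge (n - 1 - i.val) i (by have := i.isLt; omega)) (hle i.val i rfl))

lemma patLe_antisymm {p q : PermPat} (hpq : PatLe p q) (hqp : PatLe q p) : p = q := by
  obtain ⟨k, σ⟩ := p
  obtain ⟨n, π⟩ := q
  have hkn : k = n := le_antisymm hpq.len_le hqp.len_le
  subst hkn
  obtain ⟨f, hf⟩ := hpq
  have hfid : ∀ i, f i = i := fun i => f.strictMono.fin_apply_eq i
  have key : ∀ i j : Fin k, σ i < σ j ↔ π i < π j := by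
    intro i j
    simpa [hfid] using hf i j
  have hmono : StrictMono (fun a => π (σ.symm a)) := by
    intro a b hab
    have : σ (σ.symm a) < σ (σ.symm b) := by simpa using hab
    exact (key _ _).mp this
  have hid : ∀ a, π (σ.symm a) = a := fun a => hmono.fin_apply_eq a
  have hσπ : σ = π := by
    apply Equiv.ext
    intro x
    have := hid (σ x)
    simpa using this.symm
  rw [hσπ]

/-- The permutation pattern poset `𝒫`. -/
instance : PartialOrder PermPat where
  le := PatLe
  le_refl := patLe_refl
  le_trans _ _ _ := patLe_trans
  le_antisymm _ _ := patLe_antisymm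

lemma PermPat.le_def {p q : PermPat} : p ≤ q ↔ PatLe p q := Iff.rfl

/-! ## The Möbius function of the pattern poset

`permMu` is the Möbius function of the pattern poset: `μ(σ,σ) = 1`,
`μ(σ,π) = -∑_{σ ≤ z < π} μ(σ,z)` for `σ < π`, and `μ(σ,π) = 0` if `σ ≰ π`.
(Every `z < π` is of length strictly smaller than `π`, so the inner sum ranges over
the permutations of each length `m < |π|`.) -/
noncomputable def permMu (p q : PermPat) : ℤ :=
  if p = q then 1
  else if PatLe p q then
    - ∑ m : Fin q.1, ∑ z : Equiv.Perm (Fin m.1),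
        if PatLe p ⟨m.1, z⟩ ∧ PatLe ⟨m.1, z⟩ q then permMu p ⟨m.1, z⟩ else 0
  else 0
termination_by q.1
decreasing_by exact m.isLt

/-! ## The Möbius function of a finite poset -/

/-- The Möbius function `μ(a,b)` of a finite poset. -/
noncomputable def muPair {X : Type*} [PartialOrder X] [Fintype X] (a b : X) : ℤ :=
  if a = b then 1
  else if a ≤ b then
    - ∑ z ∈ (Finset.univ.filter fun z : X => a ≤ z ∧ z < b).attach, muPair a z.1
  else 0
termination_by Set.ncard {z : X | z < b}
decreasing_by
  rename_i z
  have hz : z.1 < b := ((Finset.mem_filter.mp z.2).2).2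
  exact Set.ncard_lt_ncard
    ((Set.ssubset_iff_of_subset (fun w hw => lt_trans hw hz)).mpr ⟨z.1, hz, fun hmem => absurd hmem (by exact lt_irrefl _)⟩)
    (Set.toFinite _)

instance instFiniteOption' {α : Type*} [Finite α] : Finite (Option α) :=
  Finite.of_equiv (α ⊕ PUnit.{1}) (Equiv.optionEquivSumPUnit.{0} α).symm
instance {α : Type*} [Finite α] : Finite (WithTop α) := inferInstanceAs (Finite (Option α))
instance {α : Type*} [Finite α] : Finite (WithBot α) := inferInstanceAs (Finite (Option α))
instance {α : Type*} [Fintype α] : Fintype (WithTop α) := inferInstanceAs (Fintype (Option α))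
instance {α : Type*} [Fintype α] : Fintype (WithBot α) := inferInstanceAs (Fintype (Option α))

/-- For a finite poset `X`, `muHat X` is `μ(0̂,1̂)` computed in the poset obtained from `X`
by adjoining a new bottom element `0̂` and a new top element `1̂`.  (For infinite `X` the
junk value `0` is returned.) -/
noncomputable def muHat (X : Type*) [PartialOrder X] : ℤ :=
  if h : Finite X then
    letI := h
    letI : Fintype (WithBot (WithTop X)) := Fintype.ofFinite _
    muPair (⊥ : WithBot (WithTop X)) ⊤
  else 0

/-! ## Adjacencies, embeddings, normality -/

/-- The position one step before `j` (or `j` itself when `j = 0`). -/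
def prevPos {n : ℕ} (j : Fin n) : Fin n := ⟨j.val - 1, lt_of_le_of_lt (Nat.sub_le _ _) j.isLt⟩

/-- `Linked π j` says position `j` is linked to the preceding position, i.e. the letters in
positions `j-1, j` have consecutive values.  These are exactly the positions lying in the
tail of some adjacency of `π` (an adjacency is a maximal factor of consecutively valued
increasing or decreasing letters; its tail is all but its first letter). -/
def Linked {n : ℕ} (π : Equiv.Perm (Fin n)) (j : Fin n) : Prop :=
  0 < j.val ∧ ((π j).val + 1 = (π (prevPos j)).val ∨ (π (prevPos j)).val + 1 = (π j).val)

/-- The number of adjacencies (maximal linked runs) of `π`. -/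
noncomputable def numBlocks {n : ℕ} (π : Equiv.Perm (Fin n)) : ℕ :=
  (Finset.univ.filter fun j : Fin n => ¬ Linked π j).card

/-- The index (starting from 0) of the adjacency of `π` containing position `j`. -/
noncomputable def blockIdx {n : ℕ} (π : Equiv.Perm (Fin n)) (j : Fin n) : ℕ :=
  (Finset.univ.filter fun m : Fin n => ¬ Linked π m ∧ m ≤ j).card - 1

/-- The set of positions in the `i`-th adjacency of `π`. -/
noncomputable def blockF {n : ℕ} (π : Equiv.Perm (Fin n)) (i : ℕ) : Finset (Fin n) :=
  Finset.univ.filter fun j => blockIdx π j = i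

/-- The standardization of an injective tuple `v` of values in `Fin n`: the permutation of
`Fin m` whose letters are in the same relative order as `v`. -/
noncomputable def stdize {m n : ℕ} (v : Fin m → Fin n) (hv : Function.Injective v) :
    Equiv.Perm (Fin m) :=
  (Equiv.ofInjective v hv).trans
    (monoEquivOfFin (Set.range v)
      (by rw [Set.card_range_of_injective hv, Fintype.card_fin])).symm.toEquiv

/-- The pattern (as an abstract permutation) formed by the letters of `π` in the set `E`
of positions. -/
noncomputable def patternOf {n : ℕ} (π : Equiv.Perm (Fin n)) (E : Finset (Fin n)) : PermPat :=
  ⟨E.card, stdize (fun i => π ((E.orderIsoOfFin rfl) i))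
    (by
      intro i j hij
      exact (E.orderIsoOfFin rfl).injective (Subtype.coe_injective (π.injective hij)))⟩

/-- `E` is (the set of positions of the nonzero entries of) an embedding of `p` in `π`:
the letters of `π` in positions `E` form an occurrence of `p`. -/
def IsEmb (p : PermPat) {n : ℕ} (π : Equiv.Perm (Fin n)) (E : Finset (Fin n)) : Prop :=
  patternOf π E = p

/-- An embedding (given by its set `E` of nonzero positions) is normal if every position in
the tail of an adjacency of `π` is nonzero. -/
def IsNormal {n : ℕ} (π : Equiv.Perm (Fin n)) (E : Finset (Fin n)) : Prop :=
  ∀ j, Linked π j → j ∈ E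

/-- `NE p π`: the number of normal embeddings of `p` in `π`. -/
noncomputable def NE (p : PermPat) {n : ℕ} (π : Equiv.Perm (Fin n)) : ℕ :=
  Set.ncard {E : Finset (Fin n) | IsEmb p π E ∧ IsNormal π E}

/-- An embedding is rightmost if, within each adjacency of `π`, all of its zero entries
precede all of its nonzero entries. -/
def IsRightmost {n : ℕ} (π : Equiv.Perm (Fin n)) (E : Finset (Fin n)) : Prop :=
  ∀ i j : Fin n, blockIdx π i = blockIdx π j → i ≤ j → i ∈ E → j ∈ E

/-- Membership in `Ê^{p,π}`, the set of rightmost embeddings of `p` in `π`. -/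
def EhatMem (p : PermPat) {n : ℕ} (π : Equiv.Perm (Fin n)) (E : Finset (Fin n)) : Prop :=
  IsEmb p π E ∧ IsRightmost π E

/-- Membership in `EZ^{p,π}`: `S` is a nonempty set of rightmost embeddings of `p` in `π`
whose zero sets have empty intersection (every position is nonzero in some member). -/
def EZmem (p : PermPat) {n : ℕ} (π : Equiv.Perm (Fin n)) (S : Finset (Finset (Fin n))) : Prop :=
  S.Nonempty ∧ (∀ E ∈ S, EhatMem p π E) ∧ ∀ j : Fin n, ∃ E ∈ S, j ∈ E

/-- The sum `∑_{S ∈ EZ^{p,π}} (-1)^{|S|}`. -/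
noncomputable def EZsum (p : PermPat) {n : ℕ} (π : Equiv.Perm (Fin n)) : ℤ :=
  ∑ S ∈ Finset.univ.filter (fun S : Finset (Finset (Fin n)) => EZmem p π S), (-1 : ℤ) ^ S.card

/-! ## The adjacency decomposition and the posets `P(η)`, `A^{σ,π}` -/

/-- `π̂`, the adjacency decomposition of `π`, as a tuple of permutations. -/
noncomputable def Phat {n : ℕ} (π : Equiv.Perm (Fin n)) : Fin (numBlocks π) → PermPat :=
  fun i => patternOf π (blockF π i.val)

/-- `η̂`, the decomposition of an embedding (with nonzero positions `E`) along the
adjacencies of `π`. -/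
noncomputable def etaHat {n : ℕ} (π : Equiv.Perm (Fin n)) (E : Finset (Fin n)) :
    Fin (numBlocks π) → PermPat :=
  fun i => patternOf π (E.filter fun j => blockIdx π j = i.val)

/-- The product poset `P(η) = [η̂_1,π̂_1] × ⋯ × [η̂_t,π̂_t]`, as a subset of the product of
copies of the pattern poset indexed by the adjacencies of `π`. -/
noncomputable def Pemb {n : ℕ} (π : Equiv.Perm (Fin n)) (E : Finset (Fin n)) :
    Set (Fin (numBlocks π) → PermPat) :=
  Set.Icc (etaHat π E) (Phat π)

/-- `P(η)°`: the product poset `P(η)` with its bottom element `η̂` and top element `π̂`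
removed. -/
noncomputable def PembO {n : ℕ} (π : Equiv.Perm (Fin n)) (E : Finset (Fin n)) :
    Set (Fin (numBlocks π) → PermPat) :=
  Pemb π E \ {etaHat π E, Phat π}

/-- `A^{p,π} = ⋃_{η ∈ Ê^{p,π}} P(η)°`. -/
noncomputable def Aspace (p : PermPat) {n : ℕ} (π : Equiv.Perm (Fin n)) :
    Set (Fin (numBlocks π) → PermPat) :=
  ⋃ E ∈ {E : Finset (Fin n) | EhatMem p π E}, PembO π E

/-! ## Sundry notions -/

/-- The number of descents of a permutation. -/
noncomputable def desNum {n : ℕ} (π : Equiv.Perm (Fin n)) : ℕ :=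
  (Finset.univ.filter fun j : Fin n => ∃ h : j.val + 1 < n, π ⟨j.val + 1, h⟩ < π j).card

/-- The direct sum of two permutations. -/
def dsum {a b : ℕ} (σ : Equiv.Perm (Fin a)) (τ : Equiv.Perm (Fin b)) :
    Equiv.Perm (Fin (a + b)) :=
  finSumFinEquiv.symm.trans ((Equiv.sumCongr σ τ).trans finSumFinEquiv)

/-- A permutation is indecomposable if it is nonempty and not the direct sum of two
nonempty permutations. -/
def Indecomp (p : PermPat) : Prop :=
  0 < p.1 ∧ ¬ ∃ (a b : ℕ) (σ : Equiv.Perm (Fin a)) (τ : Equiv.Perm (Fin b)),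
    0 < a ∧ 0 < b ∧ p = ⟨a + b, dsum σ τ⟩

/-- `dpow lam m = lam ⊕ ⋯ ⊕ lam` (`m` summands). -/
def dpow {l : ℕ} (lam : Equiv.Perm (Fin l)) : (m : ℕ) → Equiv.Perm (Fin (m * l))
  | 0 => (finCongr (Nat.zero_mul l).symm).permCongr 1
  | m + 1 => (finCongr (by ring : m * l + l = (m + 1) * l)).permCongr (dsum (dpow lam m) lam)

/-- Direct sum of permutations, on `PermPat`. -/
def dsumP (p q : PermPat) : PermPat := ⟨p.1 + q.1, dsum p.2 q.2⟩

/-- The direct sum of a list of permutations. -/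
def dsumList : List PermPat → PermPat
  | [] => ⟨0, 1⟩
  | p :: L => dsumP p (dsumList L)

/-- The increasing permutation `ι_n = 12⋯n`. -/
def iota (n : ℕ) : PermPat := ⟨n, 1⟩

section MuAux

lemma muPair_self {X : Type*} [PartialOrder X] [Fintype X] (a : X) : muPair a a = 1 := by
  rw [muPair]; simp

lemma muPair_succ_min {X : Type*} [PartialOrder X] [Fintype X] (bot m0 : X)
    (hm : bot < m0) (hsplit : ∀ z : X, z = bot ∨ m0 ≤ z) : muPair bot m0 = -1 := by
  rw [muPair, if_neg hm.ne, if_pos hm.le]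
  rw [Finset.sum_attach _ (fun z => muPair bot z)]
  have hfil : (Finset.univ.filter fun w : X => bot ≤ w ∧ w < m0) = {bot} := by
    ext w
    simp only [Finset.mem_filter, Finset.mem_univ, true_and, Finset.mem_singleton]
    constructor
    · rintro ⟨h1, h2⟩
      rcases hsplit w with h | h
      · exact h
      · exact absurd (lt_of_le_of_lt h h2) (lt_irrefl _)
    · rintro rfl; exact ⟨le_refl _, hm⟩
  rw [hfil, Finset.sum_singleton, muPair_self]

lemma muPair_min_zero {X : Type*} [PartialOrder X] [Fintype X] (bot m0 : X)
    (hm : bot < m0) (hsplit : ∀ z : X, z = bot ∨ m0 ≤ z) :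
    ∀ z : X, m0 < z → muPair bot z = 0 := by
  have main : ∀ N : ℕ, ∀ z : X, Set.ncard {w : X | w < z} ≤ N → m0 < z → muPair bot z = 0 := by
    intro N
    induction N with
    | zero =>
      intro z hN hz
      exfalso
      have hbz : bot ∈ {w : X | w < z} := hm.trans hz
      have : {w : X | w < z}.ncard ≠ 0 := by
        intro h0
        rw [Set.ncard_eq_zero (Set.toFinite _)] at h0
        rw [h0] at hbz
        exact hbz
      omega
    | succ N ih =>
      intro z hN hz
      have hbz : bot < z := hm.trans hz
      rw [muPair, if_neg hbz.ne, if_pos hbz.le]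
      rw [Finset.sum_attach _ (fun w => muPair bot w)]
      have hval : ∀ w ∈ Finset.univ.filter (fun w : X => bot ≤ w ∧ w < z),
          muPair bot w = (if w = bot then (1:ℤ) else 0) + (if w = m0 then (-1:ℤ) else 0) := by
        intro w hw
        simp only [Finset.mem_filter, Finset.mem_univ, true_and] at hw
        by_cases hwb : w = bot
        · rw [hwb, muPair_self, if_pos rfl, if_neg hm.ne]; ring
        · have h : m0 ≤ w := (hsplit w).resolve_left hwb
          by_cases hwm : w = m0
          · rw [hwm, muPair_succ_min bot m0 hm hsplit, if_neg (hwm ▸ hwb : m0 ≠ bot), if_pos rfl]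
            ring
          · have h' : m0 < w := lt_of_le_of_ne h (Ne.symm hwm)
            have hcard : {v : X | v < w}.ncard ≤ N := by
              have hss : {v : X | v < w} ⊂ {v : X | v < z} := by
                constructor
                · intro v hv; exact hv.trans hw.2
                · intro hsub
                  exact absurd (hsub hw.2) (lt_irrefl w)
              have := Set.ncard_lt_ncard hss (Set.toFinite _)
              omega
            rw [ih w hcard h', if_neg hwb, if_neg hwm]
            ring
      rw [Finset.sum_congr rfl hval, Finset.sum_add_distrib]
      rw [Finset.sum_ite_eq' _ bot (fun _ => (1:ℤ)), Finset.sum_ite_eq' _ m0 (fun _ => (-1:ℤ))]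
      have h1 : bot ∈ Finset.univ.filter (fun w : X => bot ≤ w ∧ w < z) := by
        simp [le_refl, hbz]
      have h2 : m0 ∈ Finset.univ.filter (fun w : X => bot ≤ w ∧ w < z) := by
        simp [hm.le, hz]
      rw [if_pos h1, if_pos h2]
      ring
  intro z hz
  exact main _ z le_rfl hz

lemma muHat_of_isEmpty (X : Type*) [PartialOrder X] [IsEmpty X] : muHat X = -1 := by
  have hfin : Finite X := Finite.of_subsingleton
  rw [muHat, dif_pos hfin]
  letI : Fintype (WithBot (WithTop X)) := Fintype.ofFinite _
  have hbt : (⊥ : WithBot (WithTop X)) < ⊤ := by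
    exact bot_lt_iff_ne_bot.mpr (fun h => by simp at h)
  exact muPair_succ_min _ _ hbt (fun z => by
    induction z using WithBot.recBotCoe with
    | bot => left; rfl
    | coe w =>
      right
      induction w using WithTop.recTopCoe with
      | top => exact le_rfl
      | coe x => exact (IsEmpty.false x).elim)

lemma muHat_of_min {X : Type*} [PartialOrder X] [Finite X] (m : X) (hm : ∀ z : X, m ≤ z) :
    muHat X = 0 := by
  have hfin : Finite X := ‹_›
  rw [muHat, dif_pos hfin]
  letI : Fintype (WithBot (WithTop X)) := Fintype.ofFinite _
  have hsplit : ∀ z : WithBot (WithTop X), z = ⊥ ∨ (↑(↑m : WithTop X) : WithBot (WithTop X)) ≤ z := by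
    intro z
    induction z using WithBot.recBotCoe with
    | bot => left; rfl
    | coe w =>
      right
      induction w using WithTop.recTopCoe with
      | top => exact le_top
      | coe x => exact_mod_cast hm x
  have hbm : (⊥ : WithBot (WithTop X)) < ↑(↑m : WithTop X) := WithBot.bot_lt_coe _
  have hmt : (↑(↑m : WithTop X) : WithBot (WithTop X)) < ⊤ := by
    have h1 : (↑m : WithTop X) < ⊤ := WithTop.coe_lt_top m
    exact WithBot.coe_lt_coe.mpr h1
  exact muPair_min_zero _ _ hbm hsplit ⊤ hmt

end MuAux
section PatAux

lemma stdize_lt_iff {m n : ℕ} (v : Fin m → Fin n) (hv : Function.Injective v) (i j : Fin m) :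
    stdize v hv i < stdize v hv j ↔ v i < v j := by
  unfold stdize
  simp only [Equiv.trans_apply]
  exact ((monoEquivOfFin (Set.range v)
      (by rw [Set.card_range_of_injective hv, Fintype.card_fin])).symm.lt_iff_lt).trans
    Subtype.coe_lt_coe.symm

lemma patternOf_fst {n : ℕ} (π : Equiv.Perm (Fin n)) (E : Finset (Fin n)) :
    (patternOf π E).1 = E.card := rfl

lemma patternOf_lt_iff {n : ℕ} (π : Equiv.Perm (Fin n)) (E : Finset (Fin n))
    (i j : Fin E.card) :
    (patternOf π E).2 i < (patternOf π E).2 j ↔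
      π ((E.orderIsoOfFin rfl) i) < π ((E.orderIsoOfFin rfl) j) :=
  stdize_lt_iff _ _ i j

lemma patternOf_mono {n : ℕ} (π : Equiv.Perm (Fin n)) {A B : Finset (Fin n)} (h : A ⊆ B) :
    PatLe (patternOf π A) (patternOf π B) := by
  set a := A.orderIsoOfFin rfl with ha
  set b := B.orderIsoOfFin rfl with hb
  have hmono : StrictMono (fun i : Fin A.card => b.symm ⟨(a i : Fin n), h (a i).2⟩) := by
    intro i j hij
    apply b.symm.strictMono
    exact Subtype.mk_lt_mk.mpr (Subtype.coe_lt_coe.mpr (a.strictMono hij))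
  refine ⟨OrderEmbedding.ofStrictMono _ hmono, fun (i j : Fin A.card) => ?_⟩
  refine (patternOf_lt_iff π A i j).trans (Iff.trans ?_ (patternOf_lt_iff π B
    (b.symm ⟨(a i : Fin n), h (a i).2⟩) (b.symm ⟨(a j : Fin n), h (a j).2⟩)).symm)
  have hba : ∀ i : Fin A.card,
      ((b (b.symm ⟨(a i : Fin n), h (a i).2⟩) : Fin n)) = (a i : Fin n) := by
    intro i
    rw [b.apply_symm_apply]
  rw [hba i, hba j]

lemma permPat_eq_of_len_zero {p q : PermPat} (hp : p.1 = 0) (hq : q.1 = 0) : p = q := by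
  obtain ⟨a, pa⟩ := p
  obtain ⟨c, qc⟩ := q
  simp only at hp hq
  subst hp; subst hq
  congr 1
  exact Equiv.ext fun i => i.elim0

lemma patLe_eq_of_len_zero {p q : PermPat} (h : PatLe p q) (hq : q.1 = 0) : p = q :=
  permPat_eq_of_len_zero (Nat.le_zero.mp (hq ▸ h.len_le)) hq

lemma blockIdx_lt {n : ℕ} (π : Equiv.Perm (Fin n)) (j : Fin n) :
    blockIdx π j < numBlocks π := by
  have h0mem : (⟨0, j.pos⟩ : Fin n) ∈
      Finset.univ.filter (fun m : Fin n => ¬ Linked π m ∧ m ≤ j) := by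
    simp only [Finset.mem_filter, Finset.mem_univ, true_and]
    constructor
    · intro hL
      exact absurd hL.1 (lt_irrefl 0)
    · exact Fin.mk_le_of_le_val (Nat.zero_le _)
  have h1 : 1 ≤ (Finset.univ.filter (fun m : Fin n => ¬ Linked π m ∧ m ≤ j)).card :=
    Finset.card_pos.mpr ⟨_, h0mem⟩
  have h2 : (Finset.univ.filter (fun m : Fin n => ¬ Linked π m ∧ m ≤ j)).card ≤ numBlocks π := by
    apply Finset.card_le_card
    intro m hm
    simp only [Finset.mem_filter, Finset.mem_univ, true_and] at hm ⊢
    exact hm.1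
  unfold blockIdx numBlocks at *
  omega

lemma mem_blockF_self {n : ℕ} (π : Equiv.Perm (Fin n)) (j : Fin n) :
    j ∈ blockF π (blockIdx π j) := by
  simp [blockF]

lemma blockIdx_eq_of_mem_blockF {n : ℕ} (π : Equiv.Perm (Fin n)) {i : ℕ} {j : Fin n}
    (h : j ∈ blockF π i) : blockIdx π j = i := by
  simpa [blockF] using h

lemma finite_Iic_permPat (q : PermPat) : (Set.Iic q).Finite := by
  have : Set.Iic q ⊆ Set.range (fun x : (Σ m : Fin (q.1+1), Equiv.Perm (Fin m.1)) =>
      (⟨x.1.1, x.2⟩ : PermPat)) := by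
    intro p hp
    have hlen : p.1 ≤ q.1 := PatLe.len_le hp
    exact ⟨⟨⟨p.1, Nat.lt_succ_of_le hlen⟩, p.2⟩, rfl⟩
  exact Set.Finite.subset (Set.finite_range _) this

end PatAux
/-- For `σ < π` and `S ⊆ Ê^{σ,π}` with `|S| > 1`, the Möbius function of
the finite poset `⋂_{η ∈ S} P(η)°` is `−1` if `S ∈ EZ^{σ,π}` and `0` otherwise. -/
theorem mobius_intersection {k n : ℕ} (σ : Equiv.Perm (Fin k)) (π : Equiv.Perm (Fin n))
    (hle : PatLe ⟨k, σ⟩ ⟨n, π⟩) (hne : (⟨k, σ⟩ : PermPat) ≠ ⟨n, π⟩)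
    (S : Finset (Finset (Fin n))) (hS : ∀ E ∈ S, EhatMem ⟨k, σ⟩ π E) (hcard : 1 < S.card) :
    muHat ↥(⋂ E ∈ S, PembO π E) = if EZmem ⟨k, σ⟩ π S then -1 else 0 := by
  classical
  have hSne : S.Nonempty := Finset.card_pos.mp (by omega)
  obtain ⟨E0, hE0⟩ := hSne
  have hSne : S.Nonempty := ⟨E0, hE0⟩
  have hRM : ∀ E ∈ S, IsRightmost π E := fun E hE => (hS E hE).2
  have hcardE : ∀ E ∈ S, E.card = k := by
    intro E hE
    have h1 : patternOf π E = ⟨k, σ⟩ := (hS E hE).1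
    have h2 := congrArg Sigma.fst h1
    simpa [patternOf_fst] using h2
  -- nestedness of the per-block filters of rightmost embeddings
  have nested : ∀ E ∈ S, ∀ E' ∈ S, ∀ i : ℕ,
      (E.filter fun j => blockIdx π j = i) ⊆ (E'.filter fun j => blockIdx π j = i) ∨
      (E'.filter fun j => blockIdx π j = i) ⊆ (E.filter fun j => blockIdx π j = i) := by
    intro E hE E' hE' i
    by_contra hc
    push_neg at hc
    obtain ⟨a, ha, ha'⟩ := Finset.not_subset.mp hc.1
    obtain ⟨c, hcc, hc'⟩ := Finset.not_subset.mp hc.2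
    simp only [Finset.mem_filter] at ha ha' hcc hc'
    rcases le_total a c with hac | hca
    · exact hc' ⟨hRM E hE a c (ha.2.trans hcc.2.symm) hac ha.1, hcc.2⟩
    · exact ha' ⟨hRM E' hE' c a (hcc.2.trans ha.2.symm) hca hcc.1, ha.2⟩
  have exmax : ∀ i : ℕ, ∃ E, E ∈ S ∧ ∀ E' ∈ S,
      (E'.filter fun j => blockIdx π j = i) ⊆ (E.filter fun j => blockIdx π j = i) := by
    intro i
    obtain ⟨E, hE, hmax⟩ := S.exists_max_image
      (fun E => (E.filter fun j => blockIdx π j = i).card) hSne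
    refine ⟨E, hE, fun E' hE' => ?_⟩
    rcases nested E hE E' hE' i with h | h
    · intro x hx
      rw [Finset.eq_of_subset_of_card_le h (hmax E' hE')]
      exact hx
    · exact h
  choose Emax hEmaxS hEmax using exmax
  set b : Fin (numBlocks π) → PermPat := fun i => etaHat π (Emax i.val) i with hbdef
  have hEb_le : ∀ E ∈ S, etaHat π E ≤ b :=
    fun E hE => Pi.le_def.mpr fun i => patternOf_mono π (hEmax i.val E hE)
  have hb_le_P : b ≤ Phat π := by
    refine Pi.le_def.mpr fun i => patternOf_mono π (fun j hj => ?_)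
    simp only [Finset.mem_filter] at hj
    simpa [blockF] using hj.2
  have hfin : (⋂ E ∈ S, PembO π E).Finite := by
    apply Set.Finite.subset
      (Set.Finite.pi (fun i : Fin (numBlocks π) => finite_Iic_permPat (Phat π i)))
    intro z hz
    have hz0 := Set.mem_iInter₂.mp hz E0 hE0
    obtain ⟨h1, _⟩ := hz0
    rw [Set.mem_pi]
    intro i _
    exact Pi.le_def.mp h1.2 i
  by_cases hEZ : EZmem ⟨k, σ⟩ π S
  · rw [if_pos hEZ]
    have hempty : (⋂ E ∈ S, PembO π E) = ∅ := by
      ext z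
      simp only [Set.mem_empty_iff_false, iff_false]
      intro hz
      have hmem : ∀ E ∈ S, (etaHat π E ≤ z ∧ z ≤ Phat π) ∧ z ≠ etaHat π E ∧ z ≠ Phat π := by
        intro E hE
        obtain ⟨h1, h2⟩ := Set.mem_iInter₂.mp hz E hE
        simp only [Set.mem_insert_iff, Set.mem_singleton_iff, not_or] at h2
        exact ⟨h1, h2⟩
      have hzP : z = Phat π := by
        funext i
        by_cases hbe : blockF π i.val = ∅
        · have h1 : z i ≤ Phat π i := Pi.le_def.mp (hmem E0 hE0).1.2 i
          have hlen : (Phat π i).1 = 0 := by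
            show (patternOf π (blockF π i.val)).1 = 0
            rw [patternOf_fst, hbe, Finset.card_empty]
          exact patLe_eq_of_len_zero h1 hlen
        · have hbne : (blockF π i.val).Nonempty := Finset.nonempty_iff_ne_empty.mpr hbe
          set j0 : Fin n := (blockF π i.val).min' hbne with hj0def
          have hj0 : j0 ∈ blockF π i.val := Finset.min'_mem _ hbne
          obtain ⟨E, hE, hj0E⟩ := hEZ.2.2 j0
          have hfull : (E.filter fun j => blockIdx π j = i.val) = blockF π i.val := by
            apply Finset.Subset.antisymm
            · intro x hx
              simp only [Finset.mem_filter] at hx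
              simpa [blockF] using hx.2
            · intro x hx
              have hxi : blockIdx π x = i.val := blockIdx_eq_of_mem_blockF π hx
              have hj0i : blockIdx π j0 = i.val := blockIdx_eq_of_mem_blockF π hj0
              have hle' : j0 ≤ x := Finset.min'_le _ x hx
              exact Finset.mem_filter.mpr
                ⟨hRM E hE j0 x (hj0i.trans hxi.symm) hle' hj0E, hxi⟩
          have hPeq : etaHat π E i = Phat π i := by
            show patternOf π _ = patternOf π _
            rw [hfull]
          have h1 : z i ≤ Phat π i := Pi.le_def.mp (hmem E0 hE0).1.2 i
          have h2 : Phat π i ≤ z i := hPeq ▸ (Pi.le_def.mp (hmem E hE).1.1 i)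
          exact le_antisymm h1 h2
      exact (hmem E0 hE0).2.2 hzP
    rw [hempty]
    haveI : IsEmpty ↥(∅ : Set (Fin (numBlocks π) → PermPat)) := Set.isEmpty_coe_sort.mpr rfl
    exact muHat_of_isEmpty _
  · rw [if_neg hEZ]
    have hnc : ∃ j : Fin n, ∀ E ∈ S, j ∉ E := by
      by_contra h
      push_neg at h
      exact hEZ ⟨hSne, hS, h⟩
    obtain ⟨jstar, hjstar⟩ := hnc
    have hbneP : b ≠ Phat π := by
      intro h
      have hil : blockIdx π jstar < numBlocks π := blockIdx_lt π jstar
      have hcoord := congrFun h (⟨blockIdx π jstar, hil⟩ : Fin (numBlocks π))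
      have hcards : ((Emax (blockIdx π jstar)).filter
            fun j => blockIdx π j = blockIdx π jstar).card
          = (blockF π (blockIdx π jstar)).card := congrArg Sigma.fst hcoord
      have hclt : ((Emax (blockIdx π jstar)).filter
            fun j => blockIdx π j = blockIdx π jstar).card
          < (blockF π (blockIdx π jstar)).card := by
        apply Finset.card_lt_card
        constructor
        · intro x hx
          simp only [Finset.mem_filter] at hx
          simpa [blockF] using hx.2
        · intro hsub
          have hjmem : jstar ∈ blockF π (blockIdx π jstar) := mem_blockF_self π jstar
          have hjf := hsub hjmem
          simp only [Finset.mem_filter] at hjf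
          exact hjstar _ (hEmaxS (blockIdx π jstar)) hjf.1
      omega
    have hbneE : ∀ E ∈ S, b ≠ etaHat π E := by
      intro E hE h
      have hfeq : ∀ i : ℕ, i < numBlocks π →
          (E.filter fun j => blockIdx π j = i) = ((Emax i).filter fun j => blockIdx π j = i) := by
        intro i hi
        have hcoord := congrFun h (⟨i, hi⟩ : Fin (numBlocks π))
        have hcards : ((Emax i).filter fun j => blockIdx π j = i).card =
            (E.filter fun j => blockIdx π j = i).card := congrArg Sigma.fst hcoord
        exact Finset.eq_of_subset_of_card_le (hEmax i E hE) hcards.le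
      have hsub : ∀ E' ∈ S, E' ⊆ E := by
        intro E' hE' x hx
        have hxf : x ∈ E'.filter (fun j => blockIdx π j = blockIdx π x) :=
          Finset.mem_filter.mpr ⟨hx, rfl⟩
        have h2 := hEmax (blockIdx π x) E' hE' hxf
        rw [← hfeq (blockIdx π x) (blockIdx_lt π x)] at h2
        exact (Finset.mem_filter.mp h2).1
      have hEeq : ∀ E' ∈ S, E' = E := by
        intro E' hE'
        apply Finset.eq_of_subset_of_card_le (hsub E' hE')
        rw [hcardE E hE, hcardE E' hE']
      have hle1 : S.card ≤ 1 :=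
        Finset.card_le_one.mpr (fun a ha c hc => (hEeq a ha).trans (hEeq c hc).symm)
      omega
    have hbmem : b ∈ ⋂ E ∈ S, PembO π E := by
      apply Set.mem_iInter₂.mpr
      intro E hE
      refine ⟨⟨hEb_le E hE, hb_le_P⟩, ?_⟩
      simp only [Set.mem_insert_iff, Set.mem_singleton_iff, not_or]
      exact ⟨hbneE E hE, hbneP⟩
    haveI hfinX : Finite ↥(⋂ E ∈ S, PembO π E) := hfin.to_subtype
    refine muHat_of_min (⟨b, hbmem⟩ : ↥(⋂ E ∈ S, PembO π E)) (fun z => ?_)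
    show b ≤ z.1
    refine Pi.le_def.mpr fun i => ?_
    have hz := Set.mem_iInter₂.mp z.2 (Emax i.val) (hEmaxS i.val)
    exact Pi.le_def.mp hz.1.1 i
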